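/- Let x ∈ (0, 1/2) be an irrational number whose continued fraction expansion x = [0; a₁, a₂, …] begins, for infinitely many n, with a word of the form (w_n)^{m_n} u_n where m_n ≥ 2, w_n has length ℓ_n → ∞, w_n is not a perfect power of a shorter word, and u_n is an initial segment of w_n. Then the sequence (a_i) is not eventually periodic. -/

import Mathlib

lemma period_replicate (g : ℕ) (hg : 0 < g) :
    ∀ (k : ℕ) (w : List ℕ), w.length = k * g →
      (∀ (i : ℕ) (h : i + g < w.length), w[i + g] = w[i]'(by omega)) →
      (List.replicate k (w.take g)).flatten = w := by
  intro k
  induction k with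
  | zero =>
    intro w hlen _
    simp at hlen
    simp [hlen]
  | succ k ih =>
    intro w hlen hper
    have hgle : g ≤ w.length := by rw [hlen]; nlinarith
    have hdroplen : (w.drop g).length = k * g := by
      simp [List.length_drop, hlen]; ring_nf; omega
    have hdropper : ∀ (i : ℕ) (h : i + g < (w.drop g).length),
        (w.drop g)[i + g] = (w.drop g)[i]'(by omega) := by
      intro i h
      rw [List.getElem_drop, List.getElem_drop]
      have h' : i + g < (w.drop g).length := h
      simp only [List.length_drop] at h'
      calc w[g + (i + g)] = w[(g + i) + g]'(by omega) := getElem_congr_idx (by ring)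
        _ = w[g + i] := hper (g + i) (by omega)
    have hih := ih (w.drop g) hdroplen hdropper
    have htake : (List.replicate k ((w.drop g).take g)).flatten
        = (List.replicate k (w.take g)).flatten := by
      rcases Nat.eq_zero_or_pos k with hk | hk
      · simp [hk]
      · congr 2
        apply List.ext_getElem
        · simp only [List.length_take, hdroplen, hlen]
          rw [Nat.min_eq_left (by nlinarith), Nat.min_eq_left (by nlinarith)]
        · intro i h1 h2
          have hi : i < g := by simp [List.length_take] at h1; omega
          have hig : i + g < w.length := by rw [hlen]; nlinarith
          simp only [List.getElem_take, List.getElem_drop]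
          calc w[g + i] = w[i + g]'hig := getElem_congr_idx (by ring)
            _ = w[i] := hper i hig
    calc (List.replicate (k+1) (w.take g)).flatten
        = w.take g ++ (List.replicate k (w.take g)).flatten := by
          simp [List.replicate_succ]
      _ = w.take g ++ w.drop g := by rw [← htake, hih]
      _ = w := List.take_append_drop g w

/-- Value of the finite continued fraction `[a₀; a₁, …, a_k]` given as a list. -/
noncomputable def cfValR : List ℕ → ℝ
  | [] => 0
  | [a] => a
  | a :: b :: l => a + 1 / cfValR (b :: l)

/-- The `n`-th convergent `[0; a 0, …, a (n-1)]`. -/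
noncomputable def cfConv (a : ℕ → ℕ) (n : ℕ) : ℝ :=
  cfValR (0 :: List.ofFn fun i : Fin n => a i)

/-- `x` has infinite continued fraction expansion `[0; a 0, a 1, …]`. -/
def HasCF (x : ℝ) (a : ℕ → ℕ) : Prop :=
  Filter.Tendsto (cfConv a) Filter.atTop (nhds x)

/-- The list `l` is an initial segment of the infinite word `a`. -/
def IsPrefixOfSeq (l : List ℕ) (a : ℕ → ℕ) : Prop :=
  ∀ i : ℕ, ∀ h : i < l.length, l.get ⟨i, h⟩ = a i

/-- A word is a perfect power of a shorter word. -/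
def IsPerfectPower (w : List ℕ) : Prop :=
  ∃ (δ : List ℕ) (k : ℕ), 2 ≤ k ∧ δ.length < w.length ∧ (List.replicate k δ).flatten = w

/-- If the continued fraction expansion of an irrational `x ∈ (0, 1/2)` begins, for
arbitrarily long primitive words `w`, with `w^m u` where `m ≥ 2` and `u` is an
initial segment of `w`, then the expansion is not eventually periodic. -/
theorem repetitions_not_eventually_periodic (x : ℝ)
    (hx0 : 0 < x) (hx1 : x < 1 / 2) (hirr : Irrational x)
    (a : ℕ → ℕ) (ha : ∀ n, 1 ≤ a n) (hcf : HasCF x a)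
    (hrep : ∀ N : ℕ, ∃ (w u : List ℕ) (m : ℕ),
      N ≤ w.length ∧ 2 ≤ m ∧ ¬ IsPerfectPower w ∧ u <+: w ∧
      IsPrefixOfSeq ((List.replicate m w).flatten ++ u) a) :
    ¬ ∃ c p : ℕ, 0 < p ∧ ∀ i, c ≤ i → a (i + p) = a i := by
  rintro ⟨c, p, hp, hper⟩
  obtain ⟨w, u, m, hN, hm, hnp, hu, hpre⟩ := hrep (c + 2 * p + 1)
  rw [IsPrefixOfSeq] at hpre
  set ℓ := w.length with hℓ
  obtain ⟨m', rfl⟩ : ∃ m', m = m' + 2 := ⟨m - 2, by omega⟩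
  have hL : (List.replicate (m' + 2) w).flatten ++ u
      = w ++ (w ++ ((List.replicate m' w).flatten ++ u)) := by
    simp [List.replicate_succ, List.append_assoc]
  have hLlen : ((List.replicate (m' + 2) w).flatten ++ u).length
      = (m' + 2) * ℓ + u.length := by
    simp [List.length_flatten, List.map_replicate, List.sum_replicate, smul_eq_mul,
      Nat.mul_comm, hℓ]
  have h1 : ∀ i (hi : i < ℓ), w[i] = a i := by
    intro i hi
    have hiL : i < ((List.replicate (m' + 2) w).flatten ++ u).length := by
      rw [hLlen]; nlinarith
    have h := hpre i hiL
    rw [List.get_eq_getElem] at h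
    rw [← h, getElem_congr_coll hL, List.getElem_append_left hi]
  have h2 : ∀ i (hi : i < ℓ), w[i] = a (ℓ + i) := by
    intro i hi
    have hiL : ℓ + i < ((List.replicate (m' + 2) w).flatten ++ u).length := by
      rw [hLlen]; nlinarith
    have h := hpre (ℓ + i) hiL
    rw [List.get_eq_getElem] at h
    rw [← h, getElem_congr_coll hL,
      List.getElem_append_right (by omega : w.length ≤ ℓ + i)]
    have h3 : ℓ + i - w.length = i := by omega
    rw [getElem_congr_idx h3, List.getElem_append_left hi]
  have hper1 : ∀ i, i < ℓ → a (i + ℓ) = a i := by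
    intro i hi
    rw [Nat.add_comm, ← h2 i hi, h1 i hi]
  have hperℓ : ∀ i, c ≤ i → a (i + ℓ) = a i := by
    intro i
    induction i using Nat.strong_induction_on with
    | _ i ih =>
      intro hci
      by_cases hi : i < ℓ
      · exact hper1 i hi
      · push_neg at hi
        calc a (i + ℓ) = a ((i - p + ℓ) + p) := by
              rw [show i + ℓ = (i - p + ℓ) + p by omega]
          _ = a (i - p + ℓ) := hper _ (by omega)
          _ = a (i - p) := ih (i - p) (by omega) (by omega)
          _ = a (i - p + p) := (hper _ (by omega)).symm
          _ = a i := by rw [show i - p + p = i by omega]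
  have hiter : ∀ q : ℕ, (∀ i, c ≤ i → a (i + q) = a i) →
      ∀ (k i : ℕ), c ≤ i → a (i + q * k) = a i := by
    intro q hq k
    induction k with
    | zero => intro i hi; simp
    | succ k ih =>
      intro i hi
      rw [show i + q * (k + 1) = (i + q * k) + q by ring, hq _ (by omega), ih i hi]
  set g := Nat.gcd ℓ p with hgdef
  have hg : 0 < g := Nat.gcd_pos_of_pos_right ℓ hp
  obtain ⟨s, t, hst⟩ : ∃ s t : ℕ, g + p * t = ℓ * s := by
    have hb := Nat.gcd_eq_gcd_ab ℓ p
    set A := Nat.gcdA ℓ p with hA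
    set B := Nat.gcdB ℓ p with hB
    set n : ℤ := A.natAbs + B.natAbs + 1 with hn
    have hA1 : A ≤ (A.natAbs : ℤ) := Int.le_natAbs
    have hA2 : -(A.natAbs : ℤ) ≤ A := by
      have := Int.le_natAbs (a := -A); omega
    have hB1 : B ≤ (B.natAbs : ℤ) := Int.le_natAbs
    have hp' : (1 : ℤ) ≤ p := by exact_mod_cast hp
    have hl' : (1 : ℤ) ≤ ℓ := by
      have : 0 < ℓ := by omega
      exact_mod_cast this
    have hApos : 0 ≤ A + n * p := by nlinarith
    have hBpos : 0 ≤ n * ℓ - B := by nlinarith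
    refine ⟨(A + n * p).toNat, (n * ℓ - B).toNat, ?_⟩
    have key : (g : ℤ) + p * ((n * ℓ - B).toNat : ℤ) = ℓ * ((A + n * p).toNat : ℤ) := by
      rw [Int.toNat_of_nonneg hApos, Int.toNat_of_nonneg hBpos, hgdef, hb]
      ring
    exact_mod_cast key
  have hgper : ∀ i, c ≤ i → a (i + g) = a i := by
    intro i hi
    have e1 : a (i + ℓ * s) = a i := hiter ℓ hperℓ s i hi
    have e2 : a ((i + g) + p * t) = a (i + g) := hiter p hper t (i + g) (by omega)
    rw [← e2, show (i + g) + p * t = i + ℓ * s by omega, e1]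
  apply hnp
  have hgdvd : g ∣ ℓ := Nat.gcd_dvd_left ℓ p
  have hgp : g ≤ p := Nat.le_of_dvd hp (Nat.gcd_dvd_right ℓ p)
  have hgl : g < ℓ := by omega
  refine ⟨w.take g, ℓ / g, ?_, ?_, ?_⟩
  · rw [Nat.le_div_iff_mul_le hg]; omega
  · simp [List.length_take]; omega
  · apply period_replicate g hg (ℓ / g) w (by rw [Nat.div_mul_cancel hgdvd])
    intro i h
    rw [h2 (i + g) h, h2 i (by omega)]
    rw [show ℓ + (i + g) = (ℓ + i) + g by ring]
    exact hgper (ℓ + i) (by omega)
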